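/- The subgraph W̄₁ of W̄ induced on the class W₁ = {(p,q) : q even} is connected: for every normalized primitive pair (p,q) with q even there is a finite sequence of normalized primitive pairs with even second coordinate, starting at (1,0) and ending at (p,q), in which consecutive pairs (p',q'), (p'',q'') satisfy |p'q'' − p''q'| = 2. -/

import Mathlib

lemma W1bar_step (p q : ℤ) (hcop : IsCoprime p q) (hq : Even q) (hpos : 0 < q) :
    ∃ p' q', IsCoprime p' q' ∧ (0 < q' ∨ (q' = 0 ∧ p' = 1)) ∧ Even q' ∧
      0 ≤ q' ∧ q' < q ∧ |p * q' - p' * q| = 2 := by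
  obtain ⟨m, hm⟩ := hq
  have hm' : q = 2 * m := by linarith
  subst hm'
  have hmpos : 0 < m := by linarith
  -- p is odd
  have hpodd : Odd p := by
    rcases Int.even_or_odd p with he | ho
    · exfalso
      obtain ⟨k, hk⟩ := he
      have h2 : IsUnit (2 : ℤ) :=
        hcop.isUnit_of_dvd' ⟨k, by linarith⟩ ⟨m, rfl⟩
      rw [Int.isUnit_iff] at h2
      omega
    · exact ho
  rcases eq_or_lt_of_le (show (1:ℤ) ≤ m from hmpos) with h1 | h2
  · -- m = 1 : q = 2, neighbor (1, 0)
    refine ⟨1, 0, isCoprime_one_left, Or.inr ⟨rfl, rfl⟩, Even.zero, le_refl 0, by linarith, ?_⟩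
    rw [← h1]
    simp
  · -- m ≥ 2
    have hcopm : IsCoprime p m := hcop.of_isCoprime_of_dvd_right ⟨2, by ring⟩
    obtain ⟨a, b, hab⟩ := hcopm
    have hmne : m ≠ 0 := by omega
    set x := a % m with hx
    have hx0 : 0 ≤ x := Int.emod_nonneg a hmne
    have hxm : x < m := Int.emod_lt_of_pos a hmpos
    have hxne : x ≠ 0 := by
      intro h
      have hdvd : m ∣ a := Int.dvd_of_emod_eq_zero h
      obtain ⟨c, hc⟩ := hdvd
      have : m ∣ 1 := ⟨c * p + b, by rw [← hab, hc]; ring⟩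
      have := Int.le_of_dvd one_pos this
      omega
    set y : ℤ := -b - p * (a / m) with hy
    have hdet : p * x - y * m = 1 := by
      have hdiv : a % m = a - m * (a / m) := by
        have := Int.emod_add_mul_ediv a m; linarith
      rw [hx, hdiv, hy]
      nlinarith [hab]
    -- choose the solution with odd numerator
    obtain ⟨p', m', ε, hε, hodd, hm1, hmlt, hdet'⟩ :
        ∃ (p' m' ε : ℤ), (ε = 1 ∨ ε = -1) ∧ Odd p' ∧ 1 ≤ m' ∧ m' < m ∧
          p * m' - p' * m = ε := by
      rcases Int.even_or_odd y with hye | hyo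
      · refine ⟨p - y, m - x, -1, Or.inr rfl, ?_, by omega, by omega, by linarith⟩
        exact hpodd.sub_even hye
      · exact ⟨y, x, 1, Or.inl rfl, hyo, by omega, hxm, hdet⟩
    have hdet2 : |p * m' - p' * m| = 1 := by
      rcases hε with h | h <;> rw [hdet', h] <;> simp
    obtain ⟨k, hk⟩ := hodd
    have hcop2 : IsCoprime p' (2 : ℤ) := ⟨1, -k, by linarith⟩
    have hcopm' : IsCoprime p' m' := by
      refine ⟨-ε * m, ε * p, ?_⟩
      have : ε * ε = 1 := by rcases hε with h | h <;> rw [h] <;> ring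
      linear_combination ε * hdet' + this
    refine ⟨p', 2 * m', hcop2.mul_right hcopm', Or.inl (by linarith), ⟨m', by ring⟩,
      by linarith, by linarith, ?_⟩
    have : p * (2 * m') - p' * (2 * m) = 2 * (p * m' - p' * m) := by ring
    rw [this, abs_mul, hdet2]
    norm_num

lemma W1bar_aux : ∀ (k : ℕ) (p q : ℤ), q.toNat ≤ k →
    IsCoprime p q → (0 < q ∨ (q = 0 ∧ p = 1)) → Even q →
    ∃ (n : ℕ) (f g : ℕ → ℤ),
      f 0 = 1 ∧ g 0 = 0 ∧ f n = p ∧ g n = q ∧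
      (∀ i ≤ n, IsCoprime (f i) (g i) ∧ (0 < g i ∨ (g i = 0 ∧ f i = 1)) ∧ Even (g i)) ∧
      (∀ i < n, |f i * g (i + 1) - f (i + 1) * g i| = 2) := by
  intro k
  induction k with
  | zero =>
      intro p q hk hcop hnorm hq
      have hq0 : q = 0 := by omega
      have hp1 : p = 1 := by
        rcases hnorm with h | h
        · omega
        · exact h.2
      subst hq0; subst hp1
      exact ⟨0, fun _ => 1, fun _ => 0, rfl, rfl, rfl, rfl,
        fun i _ => ⟨isCoprime_one_left, Or.inr ⟨rfl, rfl⟩, Even.zero⟩,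
        fun i hi => absurd hi (Nat.not_lt_zero i)⟩
  | succ k ih =>
      intro p q hk hcop hnorm hq
      rcases hnorm with hpos | ⟨hq0, hp1⟩
      · obtain ⟨p', q', hcop', hnorm', hq', hq'0, hq'lt, hedge⟩ :=
          W1bar_step p q hcop hq hpos
        have hk' : q'.toNat ≤ k := by omega
        obtain ⟨n, f, g, h0f, h0g, hnf, hng, hgood, hedges⟩ :=
          ih p' q' hk' hcop' hnorm' hq'
        refine ⟨n + 1, fun i => if i ≤ n then f i else p,
          fun i => if i ≤ n then g i else q, ?_, ?_, ?_, ?_, ?_, ?_⟩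
        · simp [Nat.zero_le, h0f]
        · simp [Nat.zero_le, h0g]
        · simp
        · simp
        · intro i hi
          by_cases h : i ≤ n
          · simpa [h] using hgood i h
          · have : i = n + 1 := by omega
            simp only [h, if_false]
            exact ⟨hcop, Or.inl hpos, hq⟩
        · intro i hi
          by_cases h : i < n
          · have h1 : i ≤ n := le_of_lt h
            have h2 : i + 1 ≤ n := h
            simpa [h1, h2] using hedges i h
          · have hieq : i = n := by omega
            subst hieq
            have h2 : ¬ (i + 1 ≤ i) := by omega
            simp only [le_refl, if_true, h2, if_false, hnf, hng]
            rw [abs_sub_comm] at hedge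
            linarith [hedge]
      · subst hq0; subst hp1
        exact ⟨0, fun _ => 1, fun _ => 0, rfl, rfl, rfl, rfl,
          fun i _ => ⟨isCoprime_one_left, Or.inr ⟨rfl, rfl⟩, Even.zero⟩,
          fun i hi => absurd hi (Nat.not_lt_zero i)⟩

/-- The subgraph `W̄₁` of `W̄` induced on `W₁ = {(p,q) : q even}` is connected: every
normalized primitive pair `(p,q)` with `q` even can be joined to `(1,0)` by a finite
sequence of normalized primitive pairs with even second coordinate in which consecutive
pairs `(p',q')`, `(p'',q'')` satisfy `|p'q'' − p''q'| = 2`. -/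
theorem W1bar_connected (p q : ℤ)
    (hcop : IsCoprime p q) (hnorm : 0 < q ∨ (q = 0 ∧ p = 1)) (hq : Even q) :
    ∃ (n : ℕ) (f g : ℕ → ℤ),
      f 0 = 1 ∧ g 0 = 0 ∧ f n = p ∧ g n = q ∧
      (∀ i ≤ n, IsCoprime (f i) (g i) ∧ (0 < g i ∨ (g i = 0 ∧ f i = 1)) ∧ Even (g i)) ∧
      (∀ i < n, |f i * g (i + 1) - f (i + 1) * g i| = 2) := by
  exact W1bar_aux q.toNat p q le_rfl hcop hnorm hq
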